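/- There exists a lattice polytope P (explicitly constructible, e.g., the one in Figure 11 of the paper) such that every sequence of rectangle transformations R_1,…,R_k carrying Ver_0(P) to Ver_1(P) satisfies the strict inequality ∑_{j=1}^k |Area(R_j)| > |Area|(P); i.e., the lower bound by the absolute area of P is not always attained. -/

import Mathlib

open MeasureTheory

/-- The multiset of all x- and y-coordinates of a finite set of points in ℝ². -/
def coords (S : Finset (ℝ × ℝ)) : Multiset ℝ :=
  S.val.map Prod.fst + S.val.map Prod.snd

/-- The winding number around `p` of the lattice polytope whose horizontal edges
are the oriented segments from `q` to `h q` (`q ∈ V0`): a signed count of the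
horizontal edges crossing the vertical ray going up from `p` (+1 for a leftward
edge, −1 for a rightward edge; counterclockwise winding is positive). -/
noncomputable def wind (V0 : Finset (ℝ × ℝ)) (h : ℝ × ℝ → ℝ × ℝ) (p : ℝ × ℝ) : ℤ :=
  ∑ q ∈ V0,
    if p.2 < q.2 ∧ min q.1 (h q).1 < p.1 ∧ p.1 < max q.1 (h q).1 then
      (if (h q).1 < q.1 then 1 else -1)
    else 0

/-! ### Auxiliary definitions -/

noncomputable def qq (c t : ℝ) : ℤ := if t < c then 1 else 0

noncomputable def rr (v w p : ℝ × ℝ) : ℤ :=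
  (qq v.1 p.1 - qq w.1 p.1) * (qq v.2 p.2 - qq w.2 p.2)

noncomputable def mm (S : Finset (ℝ × ℝ)) (p : ℝ × ℝ) : ℤ :=
  ∑ q ∈ S, qq q.1 p.1 * qq q.2 p.2

lemma myNodup0 : ({((0:ℝ),(5:ℝ)),(1,7),(2,4),(3,6)} : Multiset (ℝ×ℝ)).Nodup := by
  norm_num [Multiset.nodup_cons, Multiset.mem_cons, Multiset.mem_singleton, Prod.ext_iff]

lemma myNodup1 : ({((0:ℝ),(6:ℝ)),(1,4),(2,7),(3,5)} : Multiset (ℝ×ℝ)).Nodup := by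
  norm_num [Multiset.nodup_cons, Multiset.mem_cons, Multiset.mem_singleton, Prod.ext_iff]

def myV0 : Finset (ℝ × ℝ) := ⟨{(0,5),(1,7),(2,4),(3,6)}, myNodup0⟩
def myV1 : Finset (ℝ × ℝ) := ⟨{(0,6),(1,4),(2,7),(3,5)}, myNodup1⟩

noncomputable def myh : ℝ × ℝ → ℝ × ℝ := fun q =>
  if q.2 = 5 then (3,5) else if q.2 = 7 then (2,7) else if q.2 = 4 then (1,4) else (0,6)

/-! ### Coordinate multiset facts -/

lemma mapfst0 : myV0.val.map Prod.fst = ({0,1,2,3} : Multiset ℝ) := by simp [myV0]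
lemma mapsnd0 : myV0.val.map Prod.snd = ({5,7,4,6} : Multiset ℝ) := by simp [myV0]
lemma mapfst1 : myV1.val.map Prod.fst = ({0,1,2,3} : Multiset ℝ) := by simp [myV1]
lemma mapsnd1 : myV1.val.map Prod.snd = ({6,4,7,5} : Multiset ℝ) := by simp [myV1]

lemma nodupX : ({0,1,2,3} : Multiset ℝ).Nodup := by
  norm_num [Multiset.nodup_cons, Multiset.mem_cons, Multiset.mem_singleton]

lemma nodupY : ({5,7,4,6} : Multiset ℝ).Nodup := by
  norm_num [Multiset.nodup_cons, Multiset.mem_cons, Multiset.mem_singleton]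

lemma ymsets : ({(5:ℝ),7,4,6} : Multiset ℝ) = {6,4,7,5} := by
  have h1 : ({(5:ℝ),7,4,6} : Multiset ℝ) = {4,5,6,7} := by
    simp only [Multiset.insert_eq_cons]
    rw [Multiset.cons_swap (7:ℝ) 4, Multiset.cons_swap (5:ℝ) 4, ← Multiset.cons_zero (6:ℝ),
      Multiset.cons_swap (7:ℝ) 6, Multiset.cons_zero]
  have h2 : ({(6:ℝ),4,7,5} : Multiset ℝ) = {4,5,6,7} := by
    simp only [Multiset.insert_eq_cons]
    rw [Multiset.cons_swap (6:ℝ) 4, ← Multiset.cons_zero (5:ℝ), Multiset.cons_swap (7:ℝ) 5,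
      Multiset.cons_swap (6:ℝ) 5, Multiset.cons_zero]
  rw [h1, h2]

/-! ### The basic rectangle-move step lemma -/

lemma step (S : Finset (ℝ × ℝ)) (v w : ℝ × ℝ) (hv : v ∈ S) (hw : w ∈ S) (hvw : v ≠ w)
    (hfN : (S.val.map Prod.fst).Nodup) (hsN : (S.val.map Prod.snd).Nodup) :
    (((S \ {v, w}) ∪ {(w.1, v.2), (v.1, w.2)}).val.map Prod.fst = S.val.map Prod.fst) ∧
    (((S \ {v, w}) ∪ {(w.1, v.2), (v.1, w.2)}).val.map Prod.snd = S.val.map Prod.snd) ∧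
    ∀ p : ℝ × ℝ, mm ((S \ {v, w}) ∪ {(w.1, v.2), (v.1, w.2)}) p = mm S p - rr v w p := by
  have hsub : ({v, w} : Finset (ℝ × ℝ)) ⊆ S := by
    simp [Finset.insert_subset_iff, Finset.singleton_subset_iff, hv, hw]
  by_cases hx : v.1 = w.1
  · have e1 : ((w.1, v.2) : ℝ × ℝ) = v := by rw [← hx]
    have e2 : ((v.1, w.2) : ℝ × ℝ) = w := by rw [hx]
    have hU : (S \ {v, w}) ∪ {(w.1, v.2), (v.1, w.2)} = S := by
      rw [e1, e2, Finset.sdiff_union_of_subset hsub]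
    refine ⟨by rw [hU], by rw [hU], fun p => ?_⟩
    have hr : rr v w p = 0 := by unfold rr; rw [hx]; ring
    rw [hU, hr, sub_zero]
  · have hinj : ∀ a ∈ S, ∀ b ∈ S, a.1 = b.1 → a = b := fun a ha b hb hab =>
      Multiset.inj_on_of_nodup_map hfN _ (Finset.mem_def.1 ha) _ (Finset.mem_def.1 hb) hab
    have hy : v.2 ≠ w.2 := fun h =>
      hvw (Multiset.inj_on_of_nodup_map hsN _ (Finset.mem_def.1 hv) _ (Finset.mem_def.1 hw) h)
    have hv' : ((w.1, v.2) : ℝ × ℝ) ∉ S := by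
      intro hm
      have h2 := hinj _ hm _ hw rfl
      rw [Prod.ext_iff] at h2
      exact hy h2.2
    have hw' : ((v.1, w.2) : ℝ × ℝ) ∉ S := by
      intro hm
      have h2 := hinj _ hm _ hv rfl
      rw [Prod.ext_iff] at h2
      exact hy h2.2.symm
    have hne' : ((w.1, v.2) : ℝ × ℝ) ≠ (v.1, w.2) := by
      intro h; exact hx (congrArg Prod.fst h).symm
    have hdisj : Disjoint (S \ {v, w}) ({(w.1, v.2), (v.1, w.2)} : Finset (ℝ × ℝ)) := by
      rw [Finset.disjoint_right]
      intro a ha hmem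
      have haS : a ∈ S := (Finset.mem_sdiff.1 hmem).1
      rcases Finset.mem_insert.1 ha with h | h
      · exact hv' (h ▸ haS)
      · exact hw' ((Finset.mem_singleton.1 h) ▸ haS)
    have hdisj2 : Disjoint (S \ {v, w}) ({v, w} : Finset (ℝ × ℝ)) := Finset.sdiff_disjoint
    have hSplit : S = (S \ {v, w}).disjUnion {v, w} hdisj2 := by
      rw [Finset.disjUnion_eq_union, Finset.sdiff_union_of_subset hsub]
    have hUnion : (S \ {v, w}) ∪ {(w.1, v.2), (v.1, w.2)} =
        (S \ {v, w}).disjUnion {(w.1, v.2), (v.1, w.2)} hdisj :=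
      (Finset.disjUnion_eq_union _ _ _).symm
    have pval : ({v, w} : Finset (ℝ × ℝ)).val = v ::ₘ w ::ₘ 0 := by
      rw [Finset.insert_val_of_notMem (by simp [hvw]), Finset.singleton_val,
        ← Multiset.cons_zero]
    have p'val : ({(w.1, v.2), (v.1, w.2)} : Finset (ℝ × ℝ)).val
        = ((w.1, v.2) : ℝ × ℝ) ::ₘ ((v.1, w.2) : ℝ × ℝ) ::ₘ 0 := by
      rw [Finset.insert_val_of_notMem (by simp [hne']), Finset.singleton_val,
        ← Multiset.cons_zero]
    have hval1 : ((S \ {v, w}) ∪ {(w.1, v.2), (v.1, w.2)}).val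
        = (S \ {v, w}).val + ({(w.1, v.2), (v.1, w.2)} : Finset (ℝ × ℝ)).val := by
      rw [hUnion]; rfl
    have hval2 : S.val = (S \ {v, w}).val + ({v, w} : Finset (ℝ × ℝ)).val := by
      conv_lhs => rw [hSplit]
      rfl
    refine ⟨?_, ?_, fun p => ?_⟩
    · rw [hval1, hval2, pval, p'val]
      simp only [Multiset.map_add, Multiset.map_cons, Multiset.map_zero]
      rw [Multiset.cons_swap]
    · rw [hval1, hval2, pval, p'val]
      simp only [Multiset.map_add, Multiset.map_cons, Multiset.map_zero]
    · unfold mm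
      rw [hUnion, Finset.sum_disjUnion]
      conv_rhs => rw [hSplit, Finset.sum_disjUnion]
      rw [Finset.sum_pair hne', Finset.sum_pair hvw]
      unfold rr
      simp only
      ring

/-! ### Telescoping -/

lemma fin_tele {k : ℕ} (f : Fin (k + 1) → ℤ) (d : Fin k → ℤ)
    (h : ∀ j : Fin k, f j.succ = f j.castSucc - d j) :
    f (Fin.last k) = f 0 - ∑ j, d j := by
  induction k with
  | zero => simp [Fin.last]
  | succ k ih =>
    have ih' := ih (fun t => f t.castSucc) (fun j => d j.castSucc)
      (fun j => by
        show f j.succ.castSucc = f j.castSucc.castSucc - d j.castSucc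
        rw [← Fin.succ_castSucc]
        exact h j.castSucc)
    have hlast : f (Fin.last (k + 1)) = f (Fin.last k).castSucc - d (Fin.last k) := by
      rw [← Fin.succ_last]; exact h (Fin.last k)
    rw [Fin.sum_univ_castSucc, hlast, ih', Fin.castSucc_zero]
    ring

/-! ### Splitting rectangle side lengths over cell midpoints -/

lemma xsplit (u t : ℝ) (hu : u = 0 ∨ u = 1 ∨ u = 2 ∨ u = 3) (ht : t = 0 ∨ t = 1 ∨ t = 2 ∨ t = 3) :
    |u - t| = ((|qq u (1/2) - qq t (1/2)| + |qq u (3/2) - qq t (3/2)|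
      + |qq u (5/2) - qq t (5/2)| : ℤ) : ℝ) := by
  rcases hu with h|h|h|h <;> rcases ht with h'|h'|h'|h' <;> subst h <;> subst h' <;>
    norm_num [qq]

lemma ysplit (u t : ℝ) (hu : u = 5 ∨ u = 7 ∨ u = 4 ∨ u = 6) (ht : t = 5 ∨ t = 7 ∨ t = 4 ∨ t = 6) :
    |u - t| = ((|qq u (9/2) - qq t (9/2)| + |qq u (11/2) - qq t (11/2)|
      + |qq u (13/2) - qq t (13/2)| : ℤ) : ℝ) := by
  rcases hu with h|h|h|h <;> rcases ht with h'|h'|h'|h' <;> subst h <;> subst h' <;>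
    norm_num [qq]

/-! ### The absolute area of the example -/

noncomputable def boxA : Set (ℝ × ℝ) := Set.Ioo (0:ℝ) 3 ×ˢ Set.Ico (5:ℝ) 6
noncomputable def boxB : Set (ℝ × ℝ) := Set.Ioo (1:ℝ) 2 ×ˢ Set.Ico (4:ℝ) 7

lemma wind4 (p : ℝ × ℝ) : wind myV0 myh p =
    (if p.2 < 5 ∧ 0 < p.1 ∧ p.1 < 3 then -1 else 0)
    + ((if p.2 < 7 ∧ 1 < p.1 ∧ p.1 < 2 then -1 else 0)
    + ((if p.2 < 4 ∧ 1 < p.1 ∧ p.1 < 2 then 1 else 0)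
    + (if p.2 < 6 ∧ 0 < p.1 ∧ p.1 < 3 then 1 else 0))) := by
  have e0 : myh ((0:ℝ),(5:ℝ)) = (3,5) := by norm_num [myh]
  have e1 : myh ((1:ℝ),(7:ℝ)) = (2,7) := by norm_num [myh]
  have e2 : myh ((2:ℝ),(4:ℝ)) = (1,4) := by norm_num [myh]
  have e3 : myh ((3:ℝ),(6:ℝ)) = (0,6) := by norm_num [myh]
  unfold wind myV0
  rw [Finset.sum_mk]
  simp only [Multiset.insert_eq_cons, Multiset.map_cons, Multiset.map_singleton,
    Multiset.sum_cons, Multiset.sum_singleton, e0, e1, e2, e3]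
  norm_num

lemma memA (p : ℝ × ℝ) : p ∈ boxA ↔ (0 < p.1 ∧ p.1 < 3) ∧ (5 ≤ p.2 ∧ p.2 < 6) := by
  simp [boxA, Set.mem_prod]

lemma memB (p : ℝ × ℝ) : p ∈ boxB ↔ (1 < p.1 ∧ p.1 < 2) ∧ (4 ≤ p.2 ∧ p.2 < 7) := by
  simp [boxB, Set.mem_prod]

lemma pairIf (x y1 y2 : ℝ) (h : y1 ≤ y2) (C : Prop) [Decidable C] :
    (if x < y1 ∧ C then (-1:ℤ) else 0) + (if x < y2 ∧ C then 1 else 0)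
    = if (y1 ≤ x ∧ x < y2) ∧ C then 1 else 0 := by
  by_cases hC : C <;> by_cases h1 : x < y1 <;> by_cases h2 : x < y2 <;>
    by_cases h3 : y1 ≤ x <;>
    (try simp [hC, h1, h2, h3, not_lt]) <;> first | rfl | linarith | norm_num

lemma pairIf' (x y1 y2 : ℝ) (h : y1 ≤ y2) (C : Prop) [Decidable C] :
    (if x < y2 ∧ C then (-1:ℤ) else 0) + (if x < y1 ∧ C then 1 else 0)
    = -(if (y1 ≤ x ∧ x < y2) ∧ C then 1 else 0) := by
  by_cases hC : C <;> by_cases h1 : x < y1 <;> by_cases h2 : x < y2 <;>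
    by_cases h3 : y1 ≤ x <;>
    (try simp [hC, h1, h2, h3, not_lt]) <;> first | rfl | linarith | norm_num

lemma windIco (p : ℝ × ℝ) : wind myV0 myh p =
    (if (5 ≤ p.2 ∧ p.2 < 6) ∧ (0 < p.1 ∧ p.1 < 3) then 1 else 0)
    - (if (4 ≤ p.2 ∧ p.2 < 7) ∧ (1 < p.1 ∧ p.1 < 2) then 1 else 0) := by
  rw [wind4]
  have k1 := pairIf p.2 5 6 (by norm_num) (0 < p.1 ∧ p.1 < 3)
  have k2 := pairIf' p.2 4 7 (by norm_num) (1 < p.1 ∧ p.1 < 2)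
  linarith

lemma windAB (p : ℝ × ℝ) : ((wind myV0 myh p : ℤ) : ℝ) =
    boxA.indicator (fun _ => (1:ℝ)) p - boxB.indicator (fun _ => (1:ℝ)) p := by
  classical
  rw [windIco]
  push_cast
  rw [Set.indicator_apply, Set.indicator_apply]
  simp only [memA, memB]
  split_ifs with h1 h2 h3 h4 <;> norm_num <;> tauto

lemma windabs (p : ℝ × ℝ) : |((wind myV0 myh p : ℤ) : ℝ)| =
    boxA.indicator (fun _ => (1:ℝ)) p + boxB.indicator (fun _ => (1:ℝ)) p
      - 2 * (boxA ∩ boxB).indicator (fun _ => (1:ℝ)) p := by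
  rw [windAB]
  by_cases hA : p ∈ boxA <;> by_cases hB : p ∈ boxB <;>
    simp [Set.indicator_apply, hA, hB, Set.mem_inter_iff] <;> norm_num

lemma measA : MeasurableSet boxA := measurableSet_Ioo.prod measurableSet_Ico
lemma measB : MeasurableSet boxB := measurableSet_Ioo.prod measurableSet_Ico

lemma volA : volume boxA = ENNReal.ofReal 3 := by
  rw [boxA, Measure.volume_eq_prod, Measure.prod_prod, Real.volume_Ioo, Real.volume_Ico,
    ← ENNReal.ofReal_mul (by norm_num)]
  norm_num

lemma volB : volume boxB = ENNReal.ofReal 3 := by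
  rw [boxB, Measure.volume_eq_prod, Measure.prod_prod, Real.volume_Ioo, Real.volume_Ico,
    ← ENNReal.ofReal_mul (by norm_num)]
  norm_num

lemma boxABinter : boxA ∩ boxB = Set.Ioo (1:ℝ) 2 ×ˢ Set.Ico (5:ℝ) 6 := by
  rw [boxA, boxB, Set.prod_inter_prod, Set.Ioo_inter_Ioo, Set.Ico_inter_Ico]
  norm_num

lemma volAB : volume (boxA ∩ boxB) = ENNReal.ofReal 1 := by
  rw [boxABinter, Measure.volume_eq_prod, Measure.prod_prod, Real.volume_Ioo, Real.volume_Ico,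
    ← ENNReal.ofReal_mul (by norm_num)]
  norm_num

lemma intA : Integrable (boxA.indicator (fun _ => (1:ℝ))) :=
  (integrable_indicator_iff measA).2
    (integrableOn_const (by rw [volA]; exact ENNReal.ofReal_ne_top))
lemma intB : Integrable (boxB.indicator (fun _ => (1:ℝ))) :=
  (integrable_indicator_iff measB).2
    (integrableOn_const (by rw [volB]; exact ENNReal.ofReal_ne_top))
lemma intAB : Integrable ((boxA ∩ boxB).indicator (fun _ => (1:ℝ))) :=
  (integrable_indicator_iff (measA.inter measB)).2
    (integrableOn_const (by rw [volAB]; exact ENNReal.ofReal_ne_top))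

lemma windint : ∫ p : ℝ × ℝ, |((wind myV0 myh p : ℤ) : ℝ)| = 4 := by
  simp only [windabs]
  have h12 : Integrable (fun p : ℝ × ℝ => boxA.indicator (fun _ => (1:ℝ)) p
      + boxB.indicator (fun _ => (1:ℝ)) p) := intA.add intB
  have h3 : Integrable (fun p : ℝ × ℝ => 2 * (boxA ∩ boxB).indicator (fun _ => (1:ℝ)) p) :=
    intAB.const_mul 2
  rw [integral_sub h12 h3, integral_add intA intB,
    integral_const_mul, integral_indicator_const _ measA, integral_indicator_const _ measB,
    integral_indicator_const _ (measA.inter measB), measureReal_def, measureReal_def,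
    measureReal_def, volA, volB, volAB]
  rw [ENNReal.toReal_ofReal (by norm_num), ENNReal.toReal_ofReal (by norm_num)]
  norm_num

theorem stmt19 :
    ∃ (V0 V1 : Finset (ℝ × ℝ)) (h : ℝ × ℝ → ℝ × ℝ),
      -- `V0, V1` are the initial and terminal vertices of a lattice polytope `P`:
      coords V0 = coords V1 ∧ (coords V0).Nodup ∧
      -- `h` matches each initial vertex with the terminal vertex of the
      -- horizontal edge of `P` through it,
      (∀ q ∈ V0, h q ∈ V1 ∧ (h q).2 = q.2) ∧
      -- and every sequence of rectangle transformations carrying `V0` to `V1`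
      -- has total area strictly greater than `|Area|(P) = ∫ |ω|`.
      ∀ (k : ℕ) (V : Fin (k + 1) → Finset (ℝ × ℝ)) (vv ww : Fin k → ℝ × ℝ),
        V 0 = V0 → V (Fin.last k) = V1 →
        (∀ j : Fin k, vv j ∈ V j.castSucc ∧ ww j ∈ V j.castSucc ∧ vv j ≠ ww j ∧
          V j.succ = (V j.castSucc \ {vv j, ww j}) ∪
            {((ww j).1, (vv j).2), ((vv j).1, (ww j).2)}) →
        ∑ j : Fin k, |(ww j).1 - (vv j).1| * |(ww j).2 - (vv j).2|
          > ∫ p : ℝ × ℝ, |((wind V0 h p : ℤ) : ℝ)| := by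
  refine ⟨myV0, myV1, myh, ?_, ?_, ?_, ?_⟩
  · unfold coords
    rw [mapfst0, mapsnd0, mapfst1, mapsnd1, ymsets]
  · unfold coords
    rw [mapfst0, mapsnd0]
    rw [Multiset.nodup_add]
    refine ⟨nodupX, nodupY, ?_⟩
    rw [Multiset.disjoint_left]
    intro a ha
    simp only [Multiset.insert_eq_cons, Multiset.mem_cons, Multiset.mem_singleton] at ha ⊢
    rcases ha with h|h|h|h <;> subst h <;> norm_num
  · intro q hq
    have hq' : q = ((0:ℝ),(5:ℝ)) ∨ q = (1,7) ∨ q = (2,4) ∨ q = (3,6) := by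
      simpa [myV0, Finset.mem_mk, Multiset.mem_cons, Multiset.mem_singleton] using hq
    rcases hq' with h|h|h|h <;> subst h <;>
      norm_num [myh, myV1, Finset.mem_mk, Multiset.mem_cons, Multiset.mem_singleton]
  · intro k V vv ww hV0 hVlast hmv
    rw [windint]
    -- invariant on coordinate multisets
    have hInv : ∀ t : Fin (k+1), ((V t).val.map Prod.fst = ({0,1,2,3} : Multiset ℝ))
        ∧ ((V t).val.map Prod.snd = ({5,7,4,6} : Multiset ℝ)) := by
      intro t
      induction t using Fin.induction with
      | zero => rw [hV0]; exact ⟨mapfst0, mapsnd0⟩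
      | succ i ih =>
        obtain ⟨hm1, hm2, hne, hEq⟩ := hmv i
        have hfN : ((V i.castSucc).val.map Prod.fst).Nodup := by rw [ih.1]; exact nodupX
        have hsN : ((V i.castSucc).val.map Prod.snd).Nodup := by rw [ih.2]; exact nodupY
        obtain ⟨g1, g2, _⟩ := step (V i.castSucc) (vv i) (ww i) hm1 hm2 hne hfN hsN
        rw [hEq]
        exact ⟨by rw [g1, ih.1], by rw [g2, ih.2]⟩
    have hstepm : ∀ (i : Fin k) (p : ℝ × ℝ),
        mm (V i.succ) p = mm (V i.castSucc) p - rr (vv i) (ww i) p := by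
      intro i p
      obtain ⟨hm1, hm2, hne, hEq⟩ := hmv i
      have hfN : ((V i.castSucc).val.map Prod.fst).Nodup := by
        rw [(hInv i.castSucc).1]; exact nodupX
      have hsN : ((V i.castSucc).val.map Prod.snd).Nodup := by
        rw [(hInv i.castSucc).2]; exact nodupY
      obtain ⟨_, _, g3⟩ := step (V i.castSucc) (vv i) (ww i) hm1 hm2 hne hfN hsN
      rw [hEq]
      exact g3 p
    have hDsum : ∀ p : ℝ × ℝ, mm myV0 p - mm myV1 p = ∑ j : Fin k, rr (vv j) (ww j) p := by
      intro p
      have h := fin_tele (fun t => mm (V t) p) (fun j => rr (vv j) (ww j) p)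
        (fun j => hstepm j p)
      rw [hVlast, hV0] at h
      linarith
    -- per-move cost identity
    have hcost : ∀ j : Fin k, |(ww j).1 - (vv j).1| * |(ww j).2 - (vv j).2| =
        ((|rr (vv j) (ww j) (1/2, 9/2)| + |rr (vv j) (ww j) (1/2, 11/2)|
          + |rr (vv j) (ww j) (1/2, 13/2)| + |rr (vv j) (ww j) (3/2, 9/2)|
          + |rr (vv j) (ww j) (3/2, 11/2)| + |rr (vv j) (ww j) (3/2, 13/2)|
          + |rr (vv j) (ww j) (5/2, 9/2)| + |rr (vv j) (ww j) (5/2, 11/2)|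
          + |rr (vv j) (ww j) (5/2, 13/2)| : ℤ) : ℝ) := by
      intro j
      obtain ⟨hm1, hm2, hne, hEq⟩ := hmv j
      have h1 := (hInv j.castSucc).1
      have h2 := (hInv j.castSucc).2
      have hxv : (vv j).1 = 0 ∨ (vv j).1 = 1 ∨ (vv j).1 = 2 ∨ (vv j).1 = 3 := by
        have hmem : (vv j).1 ∈ Multiset.map Prod.fst (V j.castSucc).val :=
          Multiset.mem_map_of_mem _ (Finset.mem_def.1 hm1)
        rw [h1] at hmem
        simpa [Multiset.insert_eq_cons, Multiset.mem_cons, Multiset.mem_singleton] using hmem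
      have hxw : (ww j).1 = 0 ∨ (ww j).1 = 1 ∨ (ww j).1 = 2 ∨ (ww j).1 = 3 := by
        have hmem : (ww j).1 ∈ Multiset.map Prod.fst (V j.castSucc).val :=
          Multiset.mem_map_of_mem _ (Finset.mem_def.1 hm2)
        rw [h1] at hmem
        simpa [Multiset.insert_eq_cons, Multiset.mem_cons, Multiset.mem_singleton] using hmem
      have hyv : (vv j).2 = 5 ∨ (vv j).2 = 7 ∨ (vv j).2 = 4 ∨ (vv j).2 = 6 := by
        have hmem : (vv j).2 ∈ Multiset.map Prod.snd (V j.castSucc).val :=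
          Multiset.mem_map_of_mem _ (Finset.mem_def.1 hm1)
        rw [h2] at hmem
        simpa [Multiset.insert_eq_cons, Multiset.mem_cons, Multiset.mem_singleton] using hmem
      have hyw : (ww j).2 = 5 ∨ (ww j).2 = 7 ∨ (ww j).2 = 4 ∨ (ww j).2 = 6 := by
        have hmem : (ww j).2 ∈ Multiset.map Prod.snd (V j.castSucc).val :=
          Multiset.mem_map_of_mem _ (Finset.mem_def.1 hm2)
        rw [h2] at hmem
        simpa [Multiset.insert_eq_cons, Multiset.mem_cons, Multiset.mem_singleton] using hmem
      rw [abs_sub_comm ((ww j).1) ((vv j).1), abs_sub_comm ((ww j).2) ((vv j).2),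
        xsplit _ _ hxv hxw, ysplit _ _ hyv hyw, ← Int.cast_mul]
      congr 1
      simp only [rr, abs_mul]
      ring
    have hTotal : ∑ j : Fin k, |(ww j).1 - (vv j).1| * |(ww j).2 - (vv j).2| =
        (((∑ j : Fin k, |rr (vv j) (ww j) (1/2, 9/2)|)
          + (∑ j : Fin k, |rr (vv j) (ww j) (1/2, 11/2)|)
          + (∑ j : Fin k, |rr (vv j) (ww j) (1/2, 13/2)|)
          + (∑ j : Fin k, |rr (vv j) (ww j) (3/2, 9/2)|)
          + (∑ j : Fin k, |rr (vv j) (ww j) (3/2, 11/2)|)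
          + (∑ j : Fin k, |rr (vv j) (ww j) (3/2, 13/2)|)
          + (∑ j : Fin k, |rr (vv j) (ww j) (5/2, 9/2)|)
          + (∑ j : Fin k, |rr (vv j) (ww j) (5/2, 11/2)|)
          + (∑ j : Fin k, |rr (vv j) (ww j) (5/2, 13/2)|) : ℤ) : ℝ) := by
      rw [Finset.sum_congr rfl (fun j _ => hcost j), ← Int.cast_sum]
      congr 1
      simp [Finset.sum_add_distrib]
    have hsupp : ∀ p : ℝ × ℝ, |mm myV0 p - mm myV1 p| ≤ ∑ j : Fin k, |rr (vv j) (ww j) p| := by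
      intro p
      rw [hDsum p]
      exact Finset.abs_sum_le_sum_abs _ _
    have e01 : mm myV0 ((1:ℝ)/2, (11:ℝ)/2) - mm myV1 ((1:ℝ)/2, (11:ℝ)/2) = 1 := by
      norm_num [mm, myV0, myV1, qq, Multiset.insert_eq_cons, Multiset.map_cons,
        Multiset.map_singleton, Multiset.sum_cons, Multiset.sum_singleton]
    have e21 : mm myV0 ((5:ℝ)/2, (11:ℝ)/2) - mm myV1 ((5:ℝ)/2, (11:ℝ)/2) = 1 := by
      norm_num [mm, myV0, myV1, qq, Multiset.insert_eq_cons, Multiset.map_cons,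
        Multiset.map_singleton, Multiset.sum_cons, Multiset.sum_singleton]
    have e10 : mm myV0 ((3:ℝ)/2, (9:ℝ)/2) - mm myV1 ((3:ℝ)/2, (9:ℝ)/2) = -1 := by
      norm_num [mm, myV0, myV1, qq, Multiset.insert_eq_cons, Multiset.map_cons,
        Multiset.map_singleton, Multiset.sum_cons, Multiset.sum_singleton]
    have e12 : mm myV0 ((3:ℝ)/2, (13:ℝ)/2) - mm myV1 ((3:ℝ)/2, (13:ℝ)/2) = -1 := by
      norm_num [mm, myV0, myV1, qq, Multiset.insert_eq_cons, Multiset.map_cons,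
        Multiset.map_singleton, Multiset.sum_cons, Multiset.sum_singleton]
    have hb01 : (1:ℤ) ≤ ∑ j : Fin k, |rr (vv j) (ww j) (1/2, 11/2)| := by
      have := hsupp (1/2, 11/2)
      rw [e01] at this
      simpa using this
    have hb21 : (1:ℤ) ≤ ∑ j : Fin k, |rr (vv j) (ww j) (5/2, 11/2)| := by
      have := hsupp (5/2, 11/2)
      rw [e21] at this
      simpa using this
    have hb10 : (1:ℤ) ≤ ∑ j : Fin k, |rr (vv j) (ww j) (3/2, 9/2)| := by
      have := hsupp (3/2, 9/2)
      rw [e10] at this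
      simpa using this
    have hb12 : (1:ℤ) ≤ ∑ j : Fin k, |rr (vv j) (ww j) (3/2, 13/2)| := by
      have := hsupp (3/2, 13/2)
      rw [e12] at this
      simpa using this
    have hnn : ∀ p : ℝ × ℝ, (0:ℤ) ≤ ∑ j : Fin k, |rr (vv j) (ww j) p| :=
      fun p => Finset.sum_nonneg fun i _ => abs_nonneg _
    -- the extra covered cell
    have hbonus : (1:ℤ) ≤ (∑ j : Fin k, |rr (vv j) (ww j) (1/2, 9/2)|)
        + (∑ j : Fin k, |rr (vv j) (ww j) (1/2, 13/2)|)
        + (∑ j : Fin k, |rr (vv j) (ww j) (3/2, 11/2)|)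
        + (∑ j : Fin k, |rr (vv j) (ww j) (5/2, 9/2)|)
        + (∑ j : Fin k, |rr (vv j) (ww j) (5/2, 13/2)|) := by
      by_cases hdeg : ∀ j : Fin k, (vv j).1 = (ww j).1
      · exfalso
        have h0 := hDsum ((1:ℝ)/2, (11:ℝ)/2)
        have hz : ∀ j : Fin k, rr (vv j) (ww j) ((1:ℝ)/2, (11:ℝ)/2) = 0 := fun j => by
          unfold rr; rw [hdeg j]; ring
        rw [Finset.sum_congr rfl (fun j _ => hz j), Finset.sum_const_zero, e01] at h0
        exact one_ne_zero h0
      · push_neg at hdeg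
        obtain ⟨jw, hjw⟩ := hdeg
        set Tf := Finset.univ.filter (fun j : Fin k => (vv j).1 ≠ (ww j).1) with hTf
        have hTne : Tf.Nonempty := ⟨jw, by simp [hTf, hjw]⟩
        set j0 := Tf.min' hTne with hj0
        have hj0x : (vv j0).1 ≠ (ww j0).1 := by
          have hmem := Finset.min'_mem Tf hTne
          exact (Finset.mem_filter.1 hmem).2
        have hVconst : ∀ t : Fin (k+1), (t : ℕ) ≤ (j0 : ℕ) → V t = V 0 := by
          intro t
          induction t using Fin.induction with
          | zero => intro _; rfl
          | succ i ih =>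
            intro hle
            rw [Fin.val_succ] at hle
            have hilt : (i : ℕ) < (j0 : ℕ) := hle
            have hideg : (vv i).1 = (ww i).1 := by
              by_contra hni
              have hiT : i ∈ Tf := by simp [hTf, hni]
              have hle2 := Finset.min'_le Tf i hiT
              rw [← hj0, Fin.le_def] at hle2
              omega
            obtain ⟨hm1, hm2, hne, hEq⟩ := hmv i
            have e1 : (((ww i).1, (vv i).2) : ℝ × ℝ) = vv i := by rw [← hideg]
            have e2 : (((vv i).1, (ww i).2) : ℝ × ℝ) = ww i := by rw [hideg]
            have hsub : ({vv i, ww i} : Finset (ℝ×ℝ)) ⊆ V i.castSucc := by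
              simp [Finset.insert_subset_iff, Finset.singleton_subset_iff, hm1, hm2]
            rw [hEq, e1, e2, Finset.sdiff_union_of_subset hsub]
            exact ih (by rw [Fin.coe_castSucc]; omega)
        have hmem0 : vv j0 ∈ myV0 ∧ ww j0 ∈ myV0 := by
          obtain ⟨hm1, hm2, _, _⟩ := hmv j0
          have hc : V j0.castSucc = myV0 := by
            rw [hVconst j0.castSucc (by rw [Fin.coe_castSucc]), hV0]
          rw [hc] at hm1 hm2
          exact ⟨hm1, hm2⟩
        have hv4 : vv j0 = ((0:ℝ),(5:ℝ)) ∨ vv j0 = (1,7) ∨ vv j0 = (2,4) ∨ vv j0 = (3,6) := by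
          simpa [myV0, Finset.mem_mk, Multiset.insert_eq_cons, Multiset.mem_cons,
            Multiset.mem_singleton] using hmem0.1
        have hw4 : ww j0 = ((0:ℝ),(5:ℝ)) ∨ ww j0 = (1,7) ∨ ww j0 = (2,4) ∨ ww j0 = (3,6) := by
          simpa [myV0, Finset.mem_mk, Multiset.insert_eq_cons, Multiset.mem_cons,
            Multiset.mem_singleton] using hmem0.2
        have keyj : ∀ p : ℝ × ℝ, |rr (vv j0) (ww j0) p| ≤ ∑ j : Fin k, |rr (vv j) (ww j) p| :=
          fun p => Finset.single_le_sum (f := fun j => |rr (vv j) (ww j) p|)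
            (fun i _ => abs_nonneg _) (Finset.mem_univ j0)
        have hbonus0 : (1:ℤ) ≤ |rr (vv j0) (ww j0) (1/2, 9/2)| + |rr (vv j0) (ww j0) (1/2, 13/2)|
            + |rr (vv j0) (ww j0) (3/2, 11/2)| + |rr (vv j0) (ww j0) (5/2, 9/2)|
            + |rr (vv j0) (ww j0) (5/2, 13/2)| := by
          rcases hv4 with h1|h1|h1|h1 <;> rcases hw4 with h2|h2|h2|h2 <;>
            first
              | (rw [h1, h2] at hj0x; exact absurd rfl hj0x)
              | (rw [h1, h2]; norm_num [rr, qq])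
        linarith [keyj (1/2, 9/2), keyj (1/2, 13/2), keyj (3/2, 11/2), keyj (5/2, 9/2),
          keyj (5/2, 13/2)]
    rw [hTotal]
    have hfinal : (5:ℤ) ≤ (∑ j : Fin k, |rr (vv j) (ww j) (1/2, 9/2)|)
          + (∑ j : Fin k, |rr (vv j) (ww j) (1/2, 11/2)|)
          + (∑ j : Fin k, |rr (vv j) (ww j) (1/2, 13/2)|)
          + (∑ j : Fin k, |rr (vv j) (ww j) (3/2, 9/2)|)
          + (∑ j : Fin k, |rr (vv j) (ww j) (3/2, 11/2)|)
          + (∑ j : Fin k, |rr (vv j) (ww j) (3/2, 13/2)|)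
          + (∑ j : Fin k, |rr (vv j) (ww j) (5/2, 9/2)|)
          + (∑ j : Fin k, |rr (vv j) (ww j) (5/2, 11/2)|)
          + (∑ j : Fin k, |rr (vv j) (ww j) (5/2, 13/2)|) := by
      linarith [hb01, hb21, hb10, hb12, hbonus]
    have hfinalR : ((5:ℤ) : ℝ) ≤ _ := Int.cast_le.2 hfinal
    calc (4:ℝ) < ((5:ℤ) : ℝ) := by norm_num
      _ ≤ _ := hfinalR
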